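/- The collection of circuits of the parallel connection P(M1, M2) — namely the circuits of M1, the circuits of M2, and the sets I1 ⊔ I2 where I_i ∪ {p_i} is a circuit of M_i — satisfies the circuit axioms of a matroid. -/

import Mathlib

/-- A circuit of a matroid: a minimal dependent subset of the ground set. -/
def IsCircuit {α : Type*} (M : Matroid α) (C : Set α) : Prop :=
  C ⊆ M.E ∧ ¬ M.Indep C ∧ ∀ x ∈ C, M.Indep (C \ {x})

/-- A matroid is loopless if every singleton of the ground set is independent. -/
def MLoopless {α : Type*} (M : Matroid α) : Prop := ∀ a ∈ M.E, M.Indep {a}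

/-- The circuits of the parallel connection of `M₁` and `M₂` at the (identified) basepoint
`p`: circuits of `M₁`, circuits of `M₂`, and sets `I₁ ⊔ I₂` with `I_i ∪ {p}` a circuit
of `M_i`. -/
def ParallelCircuit {α : Type*} (M₁ M₂ : Matroid α) (p : α) (C : Set α) : Prop :=
  IsCircuit M₁ C ∨ IsCircuit M₂ C ∨
    ∃ I₁ I₂ : Set α, p ∉ I₁ ∧ p ∉ I₂ ∧ IsCircuit M₁ (insert p I₁) ∧
      IsCircuit M₂ (insert p I₂) ∧ C = I₁ ∪ I₂

open Set

namespace PCAux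

variable {α : Type*} {M M₁ M₂ : Matroid α} {C C' C₁ C₂ D I I₁ I₂ J₁ J₂ : Set α} {x e p : α}

lemma circ_dep (h : IsCircuit M C) : M.Dep C := ⟨h.2.1, h.1⟩

lemma circ_nonempty (h : IsCircuit M C) : C.Nonempty := by
  rw [Set.nonempty_iff_ne_empty]; rintro rfl; exact h.2.1 M.empty_indep

lemma circ_antichain (h : IsCircuit M C) (h' : IsCircuit M C') (hss : C ⊆ C') : C = C' := by
  by_contra hne
  obtain ⟨y, hyC', hyC⟩ := exists_of_ssubset (hss.ssubset_of_ne hne)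
  exact h.2.1 ((h'.2.2 y hyC').subset (subset_diff_singleton hss hyC))

lemma circ_mem_closure (h : IsCircuit M C) (hx : x ∈ C) : x ∈ M.closure (C \ {x}) := by
  have hi := h.2.2 x hx
  have hd : M.Dep (insert x (C \ {x})) := by
    rw [insert_diff_singleton, insert_eq_of_mem hx]; exact circ_dep h
  exact ((hi.insert_dep_iff).mp hd).1

lemma fund_circuit (hI : M.Indep I) (he : e ∈ M.closure I) (heI : e ∉ I) :
    ∃ C, IsCircuit M C ∧ C ⊆ insert e I := by
  set S : Set (Set α) := {J | J ⊆ I ∧ e ∈ M.closure J} with hS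
  have hIS : I ∈ S := ⟨Subset.rfl, he⟩
  have hSne : S.Nonempty := ⟨I, hIS⟩
  set J₀ := ⋂₀ S with hJ₀
  have hJ₀I : J₀ ⊆ I := sInter_subset_of_mem hIS
  have hcl : M.closure J₀ = ⋂ J ∈ S, M.closure J :=
    hI.closure_sInter_eq_biInter_closure_of_forall_subset hSne (fun J hJ => hJ.1)
  have heJ₀ : e ∈ M.closure J₀ := by
    rw [hcl]; exact mem_iInter₂.2 fun J hJ => hJ.2
  have heJ₀' : e ∉ J₀ := fun h => heI (hJ₀I h)
  have hJ₀ind : M.Indep J₀ := hI.subset hJ₀I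
  refine ⟨insert e J₀, ⟨?_, ?_, ?_⟩, insert_subset_insert hJ₀I⟩
  · exact insert_subset (M.closure_subset_ground _ heJ₀) (hJ₀I.trans hI.subset_ground)
  · exact ((hJ₀ind.insert_dep_iff).mpr ⟨heJ₀, heJ₀'⟩).1
  · rintro y hy
    rcases eq_or_ne y e with rfl | hye
    · rwa [insert_diff_self_of_notMem heJ₀']
    · have hyJ₀ : y ∈ J₀ := by
        rcases hy with rfl | hy; · exact absurd rfl hye
        exact hy
      rw [insert_diff_of_notMem _ (by simp [hye.symm] : e ∉ ({y} : Set α))]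
      have hJy : M.Indep (J₀ \ {y}) := hJ₀ind.subset diff_subset
      have heny : e ∉ M.closure (J₀ \ {y}) := by
        intro hmem
        have : J₀ \ {y} ∈ S := ⟨(diff_subset).trans hJ₀I, hmem⟩
        exact (sInter_subset_of_mem this hyJ₀).2 rfl
      rw [hJy.insert_indep_iff_of_notMem (fun h => heJ₀' h.1)]
      exact ⟨M.closure_subset_ground _ heJ₀, heny⟩

lemma exists_circuit_of_dep (hD : M.Dep D) : ∃ C, IsCircuit M C ∧ C ⊆ D := by
  obtain ⟨I, hI⟩ := M.exists_isBasis D hD.2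
  have hne : I ≠ D := by rintro rfl; exact hD.1 hI.indep
  obtain ⟨e, heD, heI⟩ := exists_of_ssubset (hI.subset.ssubset_of_ne hne)
  obtain ⟨C, hC, hCss⟩ := fund_circuit hI.indep (hI.subset_closure heD) heI
  exact ⟨C, hC, hCss.trans (insert_subset heD hI.subset)⟩

lemma circ_elim (h1 : IsCircuit M C₁) (h2 : IsCircuit M C₂) (hne : C₁ ≠ C₂) (hx : x ∈ C₁ ∩ C₂) :
    ∃ C₃, IsCircuit M C₃ ∧ C₃ ⊆ (C₁ ∪ C₂) \ {x} := by
  have hsub : (C₁ ∪ C₂) \ {x} ⊆ M.E := diff_subset.trans (union_subset h1.1 h2.1)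
  refine exists_circuit_of_dep ⟨fun hind => ?_, hsub⟩
  obtain ⟨y, hyC₂, hyC₁⟩ : (C₂ \ C₁).Nonempty := by
    rw [nonempty_iff_ne_empty]
    intro h
    exact hne (circ_antichain h2 h1 (diff_eq_empty.mp h)).symm
  have hyx : y ≠ x := fun h => hyC₁ (h ▸ hx.1)
  set Z := ((C₁ ∪ C₂) \ {x}) \ {y} with hZ
  have hZind : M.Indep Z := hind.subset diff_subset
  have hxZ : x ∈ M.closure Z := by
    refine M.closure_subset_closure ?_ (circ_mem_closure h1 hx.1)
    intro z hz
    exact ⟨⟨Or.inl hz.1, hz.2⟩, fun h => hyC₁ (h ▸ hz.1)⟩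
  have hyZ : y ∈ M.closure Z := by
    have h1' : y ∈ M.closure (insert x Z) := by
      refine M.closure_subset_closure ?_ (circ_mem_closure h2 hyC₂)
      intro z hz
      rcases eq_or_ne z x with rfl | hzx
      · exact mem_insert _ _
      · exact Or.inr ⟨⟨Or.inr hz.1, hzx⟩, hz.2⟩
    rwa [Matroid.closure_insert_eq_of_mem_closure hxZ] at h1'
  have hyZ' : y ∉ Z := fun h => h.2 rfl
  have hdep : M.Dep (insert y Z) := (hZind.insert_dep_iff).mpr (mem_diff _ |>.mpr ⟨hyZ, hyZ'⟩)
  rw [hZ, insert_diff_singleton,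
    insert_eq_of_mem (show y ∈ (C₁ ∪ C₂) \ {x} from ⟨Or.inr hyC₂, hyx⟩)] at hdep
  exact hdep.1 hind

/-! ### Parallel connection specific lemmas -/

lemma pc_symm (h : ParallelCircuit M₁ M₂ p C) : ParallelCircuit M₂ M₁ p C := by
  rcases h with h | h | ⟨I₁, I₂, h1, h2, h3, h4, rfl⟩
  · exact Or.inr (Or.inl h)
  · exact Or.inl h
  · exact Or.inr (Or.inr ⟨I₂, I₁, h2, h1, h4, h3, union_comm _ _⟩)

lemma cross (hmeet : M₁.E ∩ M₂.E = {p}) {z : α} (h1 : z ∈ M₁.E) (h2 : z ∈ M₂.E) : z = p := by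
  have : z ∈ M₁.E ∩ M₂.E := ⟨h1, h2⟩
  rwa [hmeet] at this

lemma no_ploop (hl : MLoopless M₁) : ¬ IsCircuit M₁ {p} :=
  fun h => h.2.1 (hl p (h.1 rfl))

lemma mixed_sub (hc : IsCircuit M (insert p I)) : I ⊆ M.E :=
  (subset_insert _ _).trans hc.1

lemma mixed_ne (hl : MLoopless M₁) (hc : IsCircuit M₁ (insert p I₁)) : I₁.Nonempty := by
  rw [nonempty_iff_ne_empty]; rintro rfl
  rw [insert_empty_eq] at hc
  exact no_ploop hl hc

lemma insert_inj (hp₁ : p ∉ I₁) (hp₂ : p ∉ I₂) (h : insert p I₁ = insert p I₂) : I₁ = I₂ := by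
  rw [← insert_diff_self_of_notMem hp₁, h, insert_diff_self_of_notMem hp₂]

/-! ### antichain sublemmas -/

lemma sub_cc (hl₁ : MLoopless M₁) (hmeet : M₁.E ∩ M₂.E = {p})
    (h : IsCircuit M₁ C) (h' : IsCircuit M₂ C') (hss : C ⊆ C') : False := by
  have hCp : C ⊆ {p} := fun z hz => by
    have := cross hmeet (h.1 hz) (h'.1 (hss hz)); simpa using this
  rcases (subset_singleton_iff_eq).mp hCp with h0 | h0
  · exact (circ_nonempty h).ne_empty h0
  · exact no_ploop hl₁ (h0 ▸ h)

lemma sub_cm (hmeet : M₁.E ∩ M₂.E = {p}) (h : IsCircuit M₁ C) (hp₁ : p ∉ I₁)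
    (hc₁ : IsCircuit M₁ (insert p I₁)) (hI₂E : I₂ ⊆ M₂.E) (hp₂ : p ∉ I₂)
    (hss : C ⊆ I₁ ∪ I₂) : False := by
  have hCI₁ : C ⊆ I₁ := by
    intro z hz
    rcases hss hz with h' | h'
    · exact h'
    · exact absurd ((cross hmeet (h.1 hz) (hI₂E h')) ▸ h') hp₂
  have heq := circ_antichain h hc₁ (hCI₁.trans (subset_insert _ _))
  exact hp₁ (hCI₁ (heq ▸ mem_insert p I₁))

lemma sub_mc (hl₂ : MLoopless M₂) (hmeet : M₁.E ∩ M₂.E = {p})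
    (hc₂ : IsCircuit M₂ (insert p I₂)) (hp₂ : p ∉ I₂) (h' : IsCircuit M₁ C')
    (hss : I₁ ∪ I₂ ⊆ C') : False := by
  have hI₂ : I₂ = ∅ := by
    rw [eq_empty_iff_forall_notMem]
    intro z hz
    exact hp₂ ((cross hmeet (h'.1 (hss (Or.inr hz))) (mixed_sub hc₂ hz)) ▸ hz)
  rw [hI₂, insert_empty_eq] at hc₂
  exact no_ploop hl₂ hc₂

lemma sub_mm (hmeet : M₁.E ∩ M₂.E = {p})
    (hpI₁ : p ∉ I₁) (hpI₂ : p ∉ I₂) (hpJ₁ : p ∉ J₁) (hpJ₂ : p ∉ J₂)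
    (hcI₁ : IsCircuit M₁ (insert p I₁)) (hcI₂ : IsCircuit M₂ (insert p I₂))
    (hcJ₁ : IsCircuit M₁ (insert p J₁)) (hcJ₂ : IsCircuit M₂ (insert p J₂))
    (hss : I₁ ∪ I₂ ⊆ J₁ ∪ J₂) : I₁ ∪ I₂ = J₁ ∪ J₂ := by
  have hI₁J₁ : I₁ ⊆ J₁ := by
    intro z hz
    rcases hss (Or.inl hz) with h' | h'
    · exact h'
    · exact absurd ((cross hmeet (mixed_sub hcI₁ hz) (mixed_sub hcJ₂ h')) ▸ hz) hpI₁
  have hI₂J₂ : I₂ ⊆ J₂ := by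
    intro z hz
    rcases hss (Or.inr hz) with h' | h'
    · exact absurd ((cross hmeet (mixed_sub hcJ₁ h') (mixed_sub hcI₂ hz)) ▸ hz) hpI₂
    · exact h'
  have h1 := insert_inj hpI₁ hpJ₁
    (circ_antichain hcI₁ hcJ₁ (insert_subset_insert hI₁J₁))
  have h2 := insert_inj hpI₂ hpJ₂
    (circ_antichain hcI₂ hcJ₂ (insert_subset_insert hI₂J₂))
  rw [h1, h2]

/-! ### elimination sublemmas -/

lemma elim_cc (hmeet : M₁.E ∩ M₂.E = {p}) (h1 : IsCircuit M₁ C₁) (h2 : IsCircuit M₂ C₂)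
    (hx : x ∈ C₁ ∩ C₂) :
    ∃ C₃, ParallelCircuit M₁ M₂ p C₃ ∧ C₃ ⊆ (C₁ ∪ C₂) \ {x} := by
  obtain rfl : p = x := (cross hmeet (h1.1 hx.1) (h2.1 hx.2)).symm
  refine ⟨(C₁ \ {p}) ∪ (C₂ \ {p}), Or.inr (Or.inr ⟨C₁ \ {p}, C₂ \ {p},
    fun h => h.2 rfl, fun h => h.2 rfl, ?_, ?_, rfl⟩), ?_⟩
  · rwa [insert_diff_singleton, insert_eq_of_mem hx.1]
  · rwa [insert_diff_singleton, insert_eq_of_mem hx.2]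
  · rintro z (⟨hz, hzp⟩ | ⟨hz, hzp⟩)
    · exact ⟨Or.inl hz, hzp⟩
    · exact ⟨Or.inr hz, hzp⟩

lemma elim_cm (hmeet : M₁.E ∩ M₂.E = {p}) (h1 : IsCircuit M₁ C₁)
    (hpI₁ : p ∉ I₁) (hpI₂ : p ∉ I₂)
    (hcI₁ : IsCircuit M₁ (insert p I₁)) (hcI₂ : IsCircuit M₂ (insert p I₂))
    (hx : x ∈ C₁ ∩ (I₁ ∪ I₂)) :
    ∃ C₃, ParallelCircuit M₁ M₂ p C₃ ∧ C₃ ⊆ (C₁ ∪ (I₁ ∪ I₂)) \ {x} := by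
  have hxI₁ : x ∈ I₁ := by
    rcases hx.2 with h | h
    · exact h
    · exact absurd ((cross hmeet (h1.1 hx.1) (mixed_sub hcI₂ h)) ▸ h) hpI₂
  have hxp : x ≠ p := fun h => hpI₁ (h ▸ hxI₁)
  have hxI₂ : x ∉ I₂ := fun h => hpI₂ ((cross hmeet (h1.1 hx.1) (mixed_sub hcI₂ h)) ▸ h)
  by_cases hC₁eq : C₁ = insert p I₁
  · refine ⟨insert p I₂, Or.inr (Or.inl hcI₂), ?_⟩
    rintro z (rfl | hz)
    · exact ⟨Or.inl (hC₁eq ▸ mem_insert z I₁), fun h => hxp (Eq.symm h)⟩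
    · exact ⟨Or.inr (Or.inr hz), fun h => hxI₂ ((show z = x from h) ▸ hz)⟩
  · obtain ⟨C, hC, hCss⟩ := circ_elim h1 hcI₁ hC₁eq ⟨hx.1, mem_insert_of_mem p hxI₁⟩
    have key : ∀ z ∈ C, z ≠ p → z ∈ (C₁ ∪ (I₁ ∪ I₂)) \ {x} := by
      intro z hz hzp
      obtain ⟨hz1, hz2⟩ := hCss hz
      rcases hz1 with h | h
      · exact ⟨Or.inl h, hz2⟩
      · rcases h with rfl | h
        · exact absurd rfl hzp
        · exact ⟨Or.inr (Or.inl h), hz2⟩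
    by_cases hpC : p ∈ C
    · refine ⟨(C \ {p}) ∪ I₂, Or.inr (Or.inr ⟨C \ {p}, I₂, fun h => h.2 rfl, hpI₂, ?_, hcI₂, rfl⟩), ?_⟩
      · rwa [insert_diff_singleton, insert_eq_of_mem hpC]
      · rintro z (⟨hz, hzp⟩ | hz)
        · exact key z hz hzp
        · exact ⟨Or.inr (Or.inr hz), fun h => hxI₂ ((show z = x from h) ▸ hz)⟩
    · exact ⟨C, Or.inl hC, fun z hz => key z hz (fun h => hpC (h ▸ hz))⟩

lemma elim_mm (hmeet : M₁.E ∩ M₂.E = {p})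
    (hpI₁ : p ∉ I₁) (hpI₂ : p ∉ I₂) (hpJ₁ : p ∉ J₁) (hpJ₂ : p ∉ J₂)
    (hcI₁ : IsCircuit M₁ (insert p I₁)) (hcI₂ : IsCircuit M₂ (insert p I₂))
    (hcJ₁ : IsCircuit M₁ (insert p J₁)) (hcJ₂ : IsCircuit M₂ (insert p J₂))
    (hne : I₁ ∪ I₂ ≠ J₁ ∪ J₂) (hx₁ : x ∈ I₁) (hx₂ : x ∈ J₁) :
    ∃ C₃, ParallelCircuit M₁ M₂ p C₃ ∧ C₃ ⊆ ((I₁ ∪ I₂) ∪ (J₁ ∪ J₂)) \ {x} := by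
  have hxE : x ∈ M₁.E := mixed_sub hcI₁ hx₁
  have hxp : x ≠ p := fun h => hpI₁ (h ▸ hx₁)
  have hxI₂ : x ∉ I₂ := fun h => hpI₂ ((cross hmeet hxE (mixed_sub hcI₂ h)) ▸ h)
  have hxJ₂ : x ∉ J₂ := fun h => hpJ₂ ((cross hmeet hxE (mixed_sub hcJ₂ h)) ▸ h)
  by_cases h : insert p I₁ = insert p J₁
  · have hIJ₁ : I₁ = J₁ := insert_inj hpI₁ hpJ₁ h
    have hne₂ : insert p I₂ ≠ insert p J₂ := by
      intro h'
      exact hne (by rw [hIJ₁, insert_inj hpI₂ hpJ₂ h'])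
    obtain ⟨C, hC, hCss⟩ := circ_elim hcI₂ hcJ₂ hne₂ ⟨mem_insert p I₂, mem_insert p J₂⟩
    refine ⟨C, Or.inr (Or.inl hC), ?_⟩
    intro z hz
    obtain ⟨hz1, hz2⟩ := hCss hz
    have hzp : z ≠ p := fun h => hz2 (show z ∈ ({p} : Set α) from h)
    have hz3 : z ∈ I₂ ∪ J₂ := by
      rcases hz1 with (rfl | h') | (rfl | h')
      · exact absurd rfl hzp
      · exact Or.inl h'
      · exact absurd rfl hzp
      · exact Or.inr h'
    refine ⟨?_, fun h => ?_⟩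
    · rcases hz3 with h' | h'
      · exact Or.inl (Or.inr h')
      · exact Or.inr (Or.inr h')
    · obtain rfl : z = x := h
      rcases hz3 with h' | h'
      · exact hxI₂ h'
      · exact hxJ₂ h'
  · obtain ⟨C, hC, hCss⟩ := circ_elim hcI₁ hcJ₁ h
      ⟨mem_insert_of_mem p hx₁, mem_insert_of_mem p hx₂⟩
    have key : ∀ z ∈ C, z ≠ p → z ∈ ((I₁ ∪ I₂) ∪ (J₁ ∪ J₂)) \ {x} := by
      intro z hz hzp
      obtain ⟨hz1, hz2⟩ := hCss hz
      rcases hz1 with (rfl | h') | (rfl | h')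
      · exact absurd rfl hzp
      · exact ⟨Or.inl (Or.inl h'), hz2⟩
      · exact absurd rfl hzp
      · exact ⟨Or.inr (Or.inl h'), hz2⟩
    by_cases hpC : p ∈ C
    · refine ⟨(C \ {p}) ∪ I₂, Or.inr (Or.inr ⟨C \ {p}, I₂, fun h => h.2 rfl, hpI₂, ?_, hcI₂, rfl⟩), ?_⟩
      · rwa [insert_diff_singleton, insert_eq_of_mem hpC]
      · rintro z (⟨hz, hzp⟩ | hz)
        · exact key z hz hzp
        · exact ⟨Or.inl (Or.inr hz), fun h => hxI₂ ((show z = x from h) ▸ hz)⟩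
    · exact ⟨C, Or.inl hC, fun z hz => key z hz (fun h => hpC (h ▸ hz))⟩

end PCAux


/-- the collection of circuits of the parallel connection `P(M₁, M₂)` of two
loopless matroids whose ground sets meet exactly in the identified basepoint `p` —
namely circuits of `M₁`, circuits of `M₂`, and sets `I₁ ⊔ I₂` with `I_i ∪ {p}` a circuit
of `M_i` — satisfies the circuit axioms of a matroid: no circuit is empty, no circuit
properly contains another, and circuit elimination holds. -/
theorem parallelConnection_circuit_axioms {α : Type*} (M₁ M₂ : Matroid α) (p : α)
    (hl₁ : MLoopless M₁) (hl₂ : MLoopless M₂)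
    (hmeet : M₁.E ∩ M₂.E = {p}) :
    (∀ C, ParallelCircuit M₁ M₂ p C → C.Nonempty) ∧
    (∀ C C', ParallelCircuit M₁ M₂ p C → ParallelCircuit M₁ M₂ p C' → C ⊆ C' → C = C') ∧
    (∀ C₁ C₂ x, ParallelCircuit M₁ M₂ p C₁ → ParallelCircuit M₁ M₂ p C₂ → C₁ ≠ C₂ →
      x ∈ C₁ ∩ C₂ → ∃ C₃, ParallelCircuit M₁ M₂ p C₃ ∧ C₃ ⊆ (C₁ ∪ C₂) \ {x}) := by
  have hmeet' : M₂.E ∩ M₁.E = {p} := by rw [Set.inter_comm]; exact hmeet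
  refine ⟨?_, ?_, ?_⟩
  · rintro C (h | h | ⟨I₁, I₂, h1, h2, h3, h4, rfl⟩)
    · exact PCAux.circ_nonempty h
    · exact PCAux.circ_nonempty h
    · exact (PCAux.mixed_ne hl₁ h3).mono Set.subset_union_left
  · rintro C C' (h | h | ⟨I₁, I₂, hp1, hp2, hc1, hc2, rfl⟩)
      (h' | h' | ⟨J₁, J₂, hq1, hq2, hd1, hd2, rfl⟩) hss
    · exact PCAux.circ_antichain h h' hss
    · exact (PCAux.sub_cc hl₁ hmeet h h' hss).elim
    · exact (PCAux.sub_cm hmeet h hq1 hd1 (PCAux.mixed_sub hd2) hq2 hss).elim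
    · exact (PCAux.sub_cc hl₂ hmeet' h h' hss).elim
    · exact PCAux.circ_antichain h h' hss
    · exact (PCAux.sub_cm hmeet' h hq2 hd2 (PCAux.mixed_sub hd1) hq1
        (by rwa [Set.union_comm J₁ J₂] at hss)).elim
    · exact (PCAux.sub_mc hl₂ hmeet hc2 hp2 h' hss).elim
    · exact (PCAux.sub_mc hl₁ hmeet' hc1 hp1 h'
        (by rwa [Set.union_comm I₁ I₂] at hss)).elim
    · exact PCAux.sub_mm hmeet hp1 hp2 hq1 hq2 hc1 hc2 hd1 hd2 hss
  · rintro C C' x (h | h | ⟨I₁, I₂, hp1, hp2, hc1, hc2, rfl⟩)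
      (h' | h' | ⟨J₁, J₂, hq1, hq2, hd1, hd2, rfl⟩) hne hx
    · obtain ⟨C₃, h₃, hss⟩ := PCAux.circ_elim h h' hne hx
      exact ⟨C₃, Or.inl h₃, hss⟩
    · exact PCAux.elim_cc hmeet h h' hx
    · exact PCAux.elim_cm hmeet h hq1 hq2 hd1 hd2 hx
    · obtain ⟨C₃, h₃, hss⟩ := PCAux.elim_cc hmeet' h h' hx
      exact ⟨C₃, PCAux.pc_symm h₃, hss⟩
    · obtain ⟨C₃, h₃, hss⟩ := PCAux.circ_elim h h' hne hx
      exact ⟨C₃, Or.inr (Or.inl h₃), hss⟩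
    · obtain ⟨C₃, h₃, hss⟩ := PCAux.elim_cm hmeet' h hq2 hq1 hd2 hd1
        ⟨hx.1, by rw [Set.union_comm J₂ J₁]; exact hx.2⟩
      exact ⟨C₃, PCAux.pc_symm h₃, by rwa [Set.union_comm J₂ J₁] at hss⟩
    · obtain ⟨C₃, h₃, hss⟩ := PCAux.elim_cm hmeet h' hp1 hp2 hc1 hc2 ⟨hx.2, hx.1⟩
      exact ⟨C₃, h₃, by rwa [Set.union_comm C' (I₁ ∪ I₂)] at hss⟩
    · obtain ⟨C₃, h₃, hss⟩ := PCAux.elim_cm hmeet' h' hp2 hp1 hc2 hc1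
        ⟨hx.2, by have := hx.1; rwa [Set.union_comm I₁ I₂] at this⟩
      refine ⟨C₃, PCAux.pc_symm h₃, ?_⟩
      rwa [Set.union_comm I₂ I₁, Set.union_comm C' (I₁ ∪ I₂)] at hss
    · rcases hx.1 with hxI | hxI
      · have hxJ : x ∈ J₁ := by
          rcases hx.2 with h | h
          · exact h
          · exact absurd ((PCAux.cross hmeet (PCAux.mixed_sub hc1 hxI)
              (PCAux.mixed_sub hd2 h)) ▸ hxI) hp1
        exact PCAux.elim_mm hmeet hp1 hp2 hq1 hq2 hc1 hc2 hd1 hd2 hne hxI hxJ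
      · have hxJ : x ∈ J₂ := by
          rcases hx.2 with h | h
          · exact absurd ((PCAux.cross hmeet (PCAux.mixed_sub hd1 h)
              (PCAux.mixed_sub hc2 hxI)) ▸ hxI) hp2
          · exact h
        obtain ⟨C₃, h₃, hss⟩ := PCAux.elim_mm hmeet' hp2 hp1 hq2 hq1 hc2 hc1 hd2 hd1
          (by rw [Set.union_comm I₂ I₁, Set.union_comm J₂ J₁]; exact hne) hxI hxJ
        refine ⟨C₃, PCAux.pc_symm h₃, ?_⟩
        rwa [Set.union_comm I₂ I₁, Set.union_comm J₂ J₁] at hss
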